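/- arXiv:math/0009023 — 6 statements merged into one kernel-verified Lean document; each statement's English description precedes it below -/
import Mathlib

section
/- Let q ∈ (-1,1), c ∈ ℝ, and let (H_n) be the q-Hermite polynomials. Suppose E is a bilinear functional on polynomials satisfying E(H_n, H_m) = c^n·[n]_q!·δ_{nm}. Then E(x·H_n(x), x·H_m(x)) equals c^{n+1}·[n+2]_q! if m = n+2, c^{n-1}·[n]_q! if m = n-2, c^{n-1}·([n+1]_q·c² + [n]_q)·[n]_q! if m = n, and 0 otherwise. -/
open Polynomial

/-- The q-integer `[n]_q = (1-q^n)/(1-q)`. -/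
noncomputable def qInt (q : ℝ) (n : ℕ) : ℝ := (1 - q ^ n) / (1 - q)

/-- The q-factorial `[n]_q! = [1]_q ⋯ [n]_q`. -/
noncomputable def qFact (q : ℝ) (n : ℕ) : ℝ := ∏ k ∈ Finset.Icc 1 n, qInt q k

lemma qInt_zero (q : ℝ) : qInt q 0 = 0 := by simp [qInt]

lemma qFact_zero (q : ℝ) : qFact q 0 = 1 := by simp [qFact]

lemma qFact_succ (q : ℝ) (n : ℕ) : qFact q (n+1) = qFact q n * qInt q (n+1) := by
  rw [qFact, Finset.prod_Icc_succ_top (by omega)]; rfl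

/-- Values of a bilinear functional `E` with `E(H_n, H_m) = c^n [n]_q! δ_{nm}`
on the pairs `(x·H_n, x·H_m)`. -/
theorem bilinear_x_qHermite (q : ℝ) (hq : -1 < q) (hq' : q < 1) (c : ℝ)
    (H : ℕ → Polynomial ℝ)
    (hH0 : H 0 = 1) (hH1 : H 1 = X)
    (hrec : ∀ n, X * H (n + 1) = H (n + 2) + C (qInt q (n + 1)) * H n)
    (E : Polynomial ℝ →ₗ[ℝ] Polynomial ℝ →ₗ[ℝ] ℝ)
    (hE : ∀ n m, E (H n) (H m) = if n = m then c ^ n * qFact q n else 0)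
    (n m : ℕ) :
    E (X * H n) (X * H m) =
      if m = n + 2 then c ^ (n + 1) * qFact q (n + 2)
      else if m + 2 = n then c ^ ((n : ℤ) - 1) * qFact q n
      else if m = n then c ^ ((n : ℤ) - 1) * (qInt q (n + 1) * c ^ 2 + qInt q n) * qFact q n
      else 0 := by
  have hx : ∀ k, X * H k = H (k+1) + C (qInt q k) * H (k-1) := by
    intro k
    cases k with
    | zero => simp [hH0, hH1, qInt_zero]
    | succ k => simpa using hrec k
  have key : E (X * H n) (X * H m) =
      E (H (n+1)) (H (m+1)) + qInt q m * E (H (n+1)) (H (m-1))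
      + qInt q n * E (H (n-1)) (H (m+1)) + qInt q n * qInt q m * E (H (n-1)) (H (m-1)) := by
    rw [hx n, hx m]
    simp only [← smul_eq_C_mul, map_add, map_smul, LinearMap.add_apply,
      LinearMap.smul_apply, smul_eq_mul]
    ring
  rw [key]
  by_cases h1 : m = n + 2
  · subst h1
    rw [if_pos rfl]
    rw [hE, hE, hE, hE, if_neg (by omega), if_pos (by omega), if_neg (by omega),
      if_neg (by omega)]
    rw [qFact_succ q (n+1)]
    ring
  · rw [if_neg h1]
    by_cases h2 : m + 2 = n
    · rw [if_pos h2]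
      obtain ⟨k, rfl⟩ : ∃ k, n = k + 2 := ⟨m, h2.symm⟩
      have hm : m = k := by omega
      subst hm
      rw [hE, hE, hE, hE, if_neg (by omega), if_neg (by omega), if_pos (by omega),
        if_neg (by omega)]
      simp only [show m + 2 - 1 = m + 1 from rfl]
      rw [qFact_succ q (m+1)]
      rw [show ((m + 2 : ℕ) : ℤ) - 1 = ((m + 1 : ℕ) : ℤ) by push_cast; ring, zpow_natCast]
      ring
    · rw [if_neg h2]
      by_cases h3 : m = n
      · subst h3
        rw [if_pos rfl]
        rw [hE, hE, hE, hE, if_pos rfl, if_neg (by omega), if_neg (by omega), if_pos rfl]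
        cases m with
        | zero =>
          simp only [qInt_zero, qFact_zero, Nat.cast_zero, mul_zero, zero_mul,
            add_zero, mul_one]
          rw [qFact_succ, qFact_zero, show qInt q 1 = 1 by
            simp [qInt, div_self (by linarith : (1:ℝ) - q ≠ 0)]]
          rcases eq_or_ne c 0 with hc | hc
          · simp [hc]
          · rw [show ((0:ℤ) - 1) = (-1 : ℤ) from rfl, zpow_neg_one]
            field_simp
            ring
        | succ k =>
          simp only [show k + 1 - 1 = k from rfl]
          rw [show ((k + 1 : ℕ) : ℤ) - 1 = ((k : ℕ) : ℤ) by push_cast; ring, zpow_natCast]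
          rw [qFact_succ q (k+1), qFact_succ q k]
          ring
      · rw [if_neg h3]
        rw [hE, hE, hE, hE, if_neg (by omega)]
        have t2 : qInt q m * (if n + 1 = m - 1 then c ^ (n+1) * qFact q (n+1) else 0) = 0 := by
          rcases Nat.eq_zero_or_pos m with hm | hm
          · simp [hm, qInt_zero]
          · rw [if_neg (by omega), mul_zero]
        have t3 : qInt q n * (if n - 1 = m + 1 then c ^ (n-1) * qFact q (n-1) else 0) = 0 := by
          rcases Nat.eq_zero_or_pos n with hn | hn
          · simp [hn, qInt_zero]
          · rw [if_neg (by omega), mul_zero]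
        have t4 : qInt q n * qInt q m *
            (if n - 1 = m - 1 then c ^ (n-1) * qFact q (n-1) else 0) = 0 := by
          rcases Nat.eq_zero_or_pos n with hn | hn
          · simp [hn, qInt_zero]
          · rcases Nat.eq_zero_or_pos m with hm | hm
            · simp [hm, qInt_zero]
            · rw [if_neg (by omega), mul_zero]
        rw [t2, t3, t4]
        ring
end

section
/- Let q ∈ (-1,1), r ∈ (-1,1), and a, b ∈ ℝ. Define A = (ab(1-q)r + a²(1-qr²))/(1-qr²), B = (ab(1+q)(1-r²))/(1-qr²), C = (ab(1-q)r + b²(1-qr²))/(1-qr²). Then A, B, C is the unique solution of the linear system: A·r² + B·r + C = a²r² + 2abr + b²; A + B·r + C·r² = a² + 2abr + b²r²; (1+q)r(A+C) + B(qr²+1) = (1+q)((a²+b²)r + ab(r²+1)). -/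
/-- The coefficients `A, B, C` of the quadratic conditional variance are the
unique solution of the linear system arising from the cases `m = n+2`,
`m = n-2`, `m = n`. -/
theorem ABC_unique_solution (q r a b : ℝ) (hq : -1 < q) (hq' : q < 1)
    (hr : -1 < r) (hr' : r < 1)
    (A B C : ℝ)
    (hA : A = (a * b * (1 - q) * r + a ^ 2 * (1 - q * r ^ 2)) / (1 - q * r ^ 2))
    (hB : B = (a * b * (1 + q) * (1 - r ^ 2)) / (1 - q * r ^ 2))
    (hC : C = (a * b * (1 - q) * r + b ^ 2 * (1 - q * r ^ 2)) / (1 - q * r ^ 2)) :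
    (A * r ^ 2 + B * r + C = a ^ 2 * r ^ 2 + 2 * a * b * r + b ^ 2 ∧
     A + B * r + C * r ^ 2 = a ^ 2 + 2 * a * b * r + b ^ 2 * r ^ 2 ∧
     (1 + q) * r * (A + C) + B * (q * r ^ 2 + 1) =
       (1 + q) * ((a ^ 2 + b ^ 2) * r + a * b * (r ^ 2 + 1))) ∧
    (∀ A' B' C' : ℝ,
      (A' * r ^ 2 + B' * r + C' = a ^ 2 * r ^ 2 + 2 * a * b * r + b ^ 2 ∧
       A' + B' * r + C' * r ^ 2 = a ^ 2 + 2 * a * b * r + b ^ 2 * r ^ 2 ∧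
       (1 + q) * r * (A' + C') + B' * (q * r ^ 2 + 1) =
         (1 + q) * ((a ^ 2 + b ^ 2) * r + a * b * (r ^ 2 + 1))) →
      A' = A ∧ B' = B ∧ C' = C) := by

  have hden : (1 - q * r ^ 2) ≠ 0 := by nlinarith [sq_nonneg r]
  have hr2 : (1 - r ^ 2) ≠ 0 := by nlinarith
  have hq1 : (q * r ^ 2 + 1) ≠ 0 := by nlinarith [sq_nonneg r]
  subst hA hB hC
  have m1 : (a * b * (1 - q) * r + a ^ 2 * (1 - q * r ^ 2)) / (1 - q * r ^ 2) * r ^ 2 +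
      (a * b * (1 + q) * (1 - r ^ 2)) / (1 - q * r ^ 2) * r +
      (a * b * (1 - q) * r + b ^ 2 * (1 - q * r ^ 2)) / (1 - q * r ^ 2) =
      a ^ 2 * r ^ 2 + 2 * a * b * r + b ^ 2 := by field_simp; ring
  have m2 : (a * b * (1 - q) * r + a ^ 2 * (1 - q * r ^ 2)) / (1 - q * r ^ 2) +
      (a * b * (1 + q) * (1 - r ^ 2)) / (1 - q * r ^ 2) * r +
      (a * b * (1 - q) * r + b ^ 2 * (1 - q * r ^ 2)) / (1 - q * r ^ 2) * r ^ 2 =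
      a ^ 2 + 2 * a * b * r + b ^ 2 * r ^ 2 := by field_simp; ring
  have m3 : (1 + q) * r * ((a * b * (1 - q) * r + a ^ 2 * (1 - q * r ^ 2)) / (1 - q * r ^ 2) +
      (a * b * (1 - q) * r + b ^ 2 * (1 - q * r ^ 2)) / (1 - q * r ^ 2)) +
      (a * b * (1 + q) * (1 - r ^ 2)) / (1 - q * r ^ 2) * (q * r ^ 2 + 1) =
      (1 + q) * ((a ^ 2 + b ^ 2) * r + a * b * (r ^ 2 + 1)) := by field_simp; ring
  refine ⟨⟨m1, m2, m3⟩, ?_⟩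
  rintro A' B' C' ⟨e1, e2, e3⟩
  set A := (a * b * (1 - q) * r + a ^ 2 * (1 - q * r ^ 2)) / (1 - q * r ^ 2) with hA
  set B := (a * b * (1 + q) * (1 - r ^ 2)) / (1 - q * r ^ 2) with hB
  set C := (a * b * (1 - q) * r + b ^ 2 * (1 - q * r ^ 2)) / (1 - q * r ^ 2) with hC
  have d1 : (A' - A) * r ^ 2 + (B' - B) * r + (C' - C) = 0 := by linear_combination e1 - m1
  have d2 : (A' - A) + (B' - B) * r + (C' - C) * r ^ 2 = 0 := by linear_combination e2 - m2
  have d3 : (1 + q) * r * ((A' - A) + (C' - C)) + (B' - B) * (q * r ^ 2 + 1) = 0 := by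
    linear_combination e3 - m3
  have hAC : A' - A = C' - C := by
    have h4 : ((A' - A) - (C' - C)) * (r ^ 2 - 1) = 0 := by linear_combination d1 - d2
    rcases mul_eq_zero.1 h4 with h | h
    · linarith
    · exact absurd (by linarith : (1 : ℝ) - r ^ 2 = 0) hr2
  have h5 : (A' - A) * (r ^ 2 + 1) + (B' - B) * r = 0 := by
    linear_combination (1/2 : ℝ) * d1 + (1/2 : ℝ) * d2 + ((r ^ 2 + 1) / 2) * hAC
  have h6 : 2 * (1 + q) * r * (A' - A) + (B' - B) * (q * r ^ 2 + 1) = 0 := by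
    linear_combination d3 + (1 + q) * r * hAC
  have h7 : (A' - A) * ((1 - r ^ 2) * (1 - q * r ^ 2)) = 0 := by
    linear_combination (q * r ^ 2 + 1) * h5 - r * h6
  have hA' : A' = A := by
    rcases mul_eq_zero.1 h7 with h | h
    · linarith
    · exact absurd h (mul_ne_zero hr2 hden)
  have hB' : B' = B := by
    have : (B' - B) * (q * r ^ 2 + 1) = 0 := by linear_combination h6 - 2 * (1 + q) * r * (by linarith : A' - A = 0)
    rcases mul_eq_zero.1 this with h | h
    · linarith
    · exact absurd h hq1
  exact ⟨hA', hB', by linarith [hAC]⟩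
end

section
/- Let q ∈ (-1,1), and let u, v, w ∈ ℝ (representing ⟨f,g⟩, ⟨g,h⟩, ⟨f,h⟩) with 0 < w < 1, and set a = (u - vw)/(1-w²), b = (v - uw)/(1-w²). Then the following identity holds: (1-qw²)(1-w)² · V = (1-w)²·(1-qw² + (1+q)·w·u·v) - (u-v)²·(1+w²), where V = 1 - a² - b² - ab·w·((1+q)(1-w²)+2(1-q))/(1-qw²) - (ab(1-q)/(1-qw²))·(w·s - t)·(w·t - s) evaluated at s = √2/√(1-q), t = -√2/√(1-q). -/
/-- The key algebraic identity (formula (foo2)): the conditional variance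
evaluated at the boundary point `s = √2/√(1-q)`, `t = -√2/√(1-q)`. -/
theorem bell_key_identity (q u v w : ℝ) (hq : -1 < q) (hq' : q < 1)
    (hw : 0 < w) (hw' : w < 1)
    (a b s t V : ℝ)
    (ha : a = (u - v * w) / (1 - w ^ 2))
    (hb : b = (v - u * w) / (1 - w ^ 2))
    (hs : s = Real.sqrt 2 / Real.sqrt (1 - q))
    (ht : t = -(Real.sqrt 2 / Real.sqrt (1 - q)))
    (hV : V = 1 - a ^ 2 - b ^ 2
        - a * b * w * ((1 + q) * (1 - w ^ 2) + 2 * (1 - q)) / (1 - q * w ^ 2)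
        - (a * b * (1 - q) / (1 - q * w ^ 2)) * (w * s - t) * (w * t - s)) :
    (1 - q * w ^ 2) * (1 - w) ^ 2 * V =
      (1 - w) ^ 2 * (1 - q * w ^ 2 + (1 + q) * w * u * v)
        - (u - v) ^ 2 * (1 + w ^ 2) := by
  have hq1 : (0:ℝ) < 1 - q := by linarith
  have hs2 : s ^ 2 = 2 / (1 - q) := by
    rw [hs, div_pow, Real.sq_sqrt (by norm_num : (2:ℝ) ≥ 0).le, Real.sq_sqrt hq1.le]
  have hts : t = -s := by rw [ht, hs]
  have hw2 : (1:ℝ) - w ^ 2 ≠ 0 := by nlinarith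
  have hqw : (1:ℝ) - q * w ^ 2 ≠ 0 := by nlinarith [sq_nonneg w, sq_nonneg (q*w)]
  have hq1' : (1:ℝ) - q ≠ 0 := ne_of_gt hq1
  have hterm : a * b * (1 - q) / (1 - q * w ^ 2) * (w * s - t) * (w * t - s)
      = -(a * b * (1 - q) / (1 - q * w ^ 2) * (2 / (1 - q)) * (1 + w) ^ 2) := by
    rw [hts]
    linear_combination (-(a * b * (1 - q) / (1 - q * w ^ 2)) * (1 + w) ^ 2) * hs2
  rw [hterm] at hV
  subst hV ha hb
  field_simp
  ring
end

section
/- Let q ∈ [-1,1) and u, v, w ∈ [-1,1] with 0 < w < 1, u·v ≤ w (sub-Markov condition). If (1-w)²·(1-qw² + (1+q)·w·u·v) ≥ (u-v)²·(1+w²), then 1 - w ≥ |u - v|. -/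
/-- The extended Bell inequality: non-negativity of the boundary conditional
variance together with the sub-Markov condition implies `1 - w ≥ |u - v|`. -/
theorem bell_inequality_from_variance (q u v w : ℝ)
    (hq : -1 ≤ q) (hq' : q < 1)
    (hu : -1 ≤ u) (hu' : u ≤ 1) (hv : -1 ≤ v) (hv' : v ≤ 1)
    (hw : 0 < w) (hw' : w < 1) (hsub : u * v ≤ w)
    (hvar : (1 - w) ^ 2 * (1 - q * w ^ 2 + (1 + q) * w * u * v) ≥
      (u - v) ^ 2 * (1 + w ^ 2)) :
    1 - w ≥ |u - v| := by
  have key : (1 - w) ^ 2 * (1 - q * w ^ 2 + (1 + q) * w * u * v) ≤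
      (1 - w) ^ 2 * (1 + w ^ 2) := by
    have h1 : (1 + q) * w * (u * v - w) ≤ 0 :=
      mul_nonpos_of_nonneg_of_nonpos (by nlinarith) (by linarith)
    nlinarith [sq_nonneg (1 - w)]
  have hsq : (u - v) ^ 2 ≤ (1 - w) ^ 2 := by nlinarith [sq_nonneg w]
  rcases abs_cases (u - v) with ⟨h, _⟩ | ⟨h, _⟩ <;> nlinarith
end

section
/- For every w ∈ (0,1), there exists u ∈ ℝ with 2w² - 1 < u < 2w - 1; and for any such u, the matrix [[1,u,w],[u,1,w],[w,w,1]] is positive semidefinite while Bell's inequality 1 - w ≥ |u - w| fails (since 1 + u < 2w). -/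
/-- Example 1: for every `w ∈ (0,1)` there is `u` with `2w² - 1 < u < 2w - 1`;
for any such `u` the matrix `[[1,u,w],[u,1,w],[w,w,1]]` is positive
semidefinite while Bell's inequality `1 - w ≥ |u - w|` fails, since `1 + u < 2w`. -/
theorem bell_violating_covariance (w : ℝ) (hw : 0 < w) (hw' : w < 1) :
    (∃ u : ℝ, 2 * w ^ 2 - 1 < u ∧ u < 2 * w - 1) ∧
    ∀ u : ℝ, 2 * w ^ 2 - 1 < u → u < 2 * w - 1 →
      (!![(1:ℝ), u, w; u, 1, w; w, w, 1]).PosSemidef ∧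
      1 + u < 2 * w ∧ ¬ (1 - w ≥ |u - w|) := by
  constructor
  · exact ⟨w ^ 2 + w - 1, by nlinarith, by nlinarith⟩
  · intro u hu1 hu2
    refine ⟨Matrix.posSemidef_iff_dotProduct_mulVec.mpr ⟨?_, ?_⟩, by linarith, ?_⟩
    · ext i j
      fin_cases i <;> fin_cases j <;> rfl
    · intro x
      have hx : dotProduct (star x) ((!![(1:ℝ), u, w; u, 1, w; w, w, 1]).mulVec x) =
          x 0 * (x 0 + u * x 1 + w * x 2) + x 1 * (u * x 0 + x 1 + w * x 2)
          + x 2 * (w * x 0 + w * x 1 + x 2) := by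
        simp [dotProduct, Matrix.mulVec, Fin.sum_univ_three]
      rw [hx]
      nlinarith [sq_nonneg (x 2 + w * (x 0 + x 1)), sq_nonneg (x 0 + x 1),
        sq_nonneg (x 0 - x 1), sq_nonneg (x 0 + x 1 + x 2)]
    · intro h
      have h1 : u < w := by linarith
      rw [abs_of_nonpos (by linarith)] at h
      linarith
end

section
/- Let q ∈ (-1,1) and w = 1/2. If u, A, B, C satisfy the conditional-variance non-negativity at x = 2/√(1-q), z = -2/√(1-q) for the q-Gaussian triplet with ⟨f,h⟩ = ⟨g,h⟩ = 1/2 and ⟨f,g⟩ = u, i.e. (with a = (u - 1/4)/(3/4), b = (1/2 - u/2)/(3/4)): 1 - a² - b² - (ab/2)·((1+q)(3/4)+2(1-q))/(1-q/4) - (ab(1-q)/(1-q/4))·(z/2 - x)·(x/2 - z) ≥ 0 at that point, then u ≥ (q+5)/36. -/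
/-- Example 2: with correlations `⟨f,h⟩ = ⟨g,h⟩ = 1/2` and `⟨f,g⟩ = u`,
non-negativity of the conditional variance at the boundary point
`x = 2/√(1-q)`, `z = -x` forces `u ≥ (q+5)/36`. -/
theorem example_two_constraint (q u : ℝ) (hq : -1 < q) (hq' : q < 1)
    (a b x z : ℝ)
    (ha : a = (u - 1/4) / (3/4))
    (hb : b = (1/2 - u/2) / (3/4))
    (hx : x = 2 / Real.sqrt (1 - q))
    (hz : z = -x)
    (hvar : 1 - a ^ 2 - b ^ 2
        - (a * b / 2) * ((1 + q) * (3/4) + 2 * (1 - q)) / (1 - q/4)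
        - (a * b * (1 - q) / (1 - q/4)) * (z/2 - x) * (x/2 - z) ≥ 0) :
    u ≥ (q + 5) / 36 := by
  have h1q : (0:ℝ) < 1 - q := by linarith
  have hs : Real.sqrt (1 - q) > 0 := Real.sqrt_pos.mpr h1q
  have hx2 : x ^ 2 * (1 - q) = 4 := by
    rw [hx, div_pow, Real.sq_sqrt h1q.le]
    field_simp
    norm_num
  have hd : (0:ℝ) < 1 - q/4 := by linarith
  subst ha hb hz
  have hprod : (-x/2 - x) * (x/2 - -x) = -9/(1-q) := by
    rw [eq_div_iff h1q.ne']
    linear_combination (-9/4) * hx2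
  rw [mul_assoc _ (-x/2 - x) (x/2 - -x), hprod, ge_iff_le] at hvar
  have hne : (1:ℝ) - q/4 ≠ 0 := ne_of_gt hd
  have heq : 1 - ((u - 1/4)/(3/4)) ^ 2 - ((1/2 - u/2)/(3/4)) ^ 2
      - ((u - 1/4)/(3/4) * ((1/2 - u/2)/(3/4)) / 2) * ((1 + q) * (3/4) + 2 * (1 - q)) / (1 - q/4)
      - ((u - 1/4)/(3/4) * ((1/2 - u/2)/(3/4)) * (1 - q) / (1 - q/4)) * (-9/(1-q))
      = (1 - u) * (36*u - q - 5) / (4 * (1 - q/4)) := by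
    have h4 : (4:ℝ) - q ≠ 0 := by linarith
    field_simp [h1q.ne', h4]
    ring
  rw [heq, le_div_iff₀ (by linarith : (0:ℝ) < 4 * (1 - q/4)), zero_mul] at hvar
  nlinarith [hvar]
end
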